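/- The Loomis–Whitney inequality in ℝ^d: for nonnegative measurable functions f_1, ..., f_d on ℝ^{d-1}, one has ∫_{ℝ^d} ∏_{j=1}^d f_j(π_j(x)) dx ≤ ∏_{j=1}^d ‖f_j‖_{L^{d-1}(ℝ^{d-1})}, where π_j : ℝ^d → ℝ^{d-1} deletes the j-th coordinate. -/

import Mathlib

open MeasureTheory ENNReal

private lemma measurable_finCons {n : ℕ} :
    Measurable (fun p : ℝ × (Fin n → ℝ) => (Fin.cons p.1 p.2 : Fin (n + 1) → ℝ)) := by
  refine measurable_pi_iff.2 fun i => ?_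
  induction i using Fin.cases with
  | zero => simpa using measurable_fst
  | succ m => simpa using (show Measurable fun p : ℝ × (Fin n → ℝ) => p.2 m from
      (measurable_pi_apply m).comp measurable_snd)

private lemma lintegral_finCons {n : ℕ} {F : (Fin (n + 1) → ℝ) → ℝ≥0∞} (hF : Measurable F) :
    ∫⁻ p : ℝ × (Fin n → ℝ), F (Fin.cons p.1 p.2) = ∫⁻ w : Fin (n + 1) → ℝ, F w := by
  have mp := ((measurePreserving_piFinSuccAbove (fun _ : Fin (n + 1) => (volume : Measure ℝ)) 0).symm)
  have h := mp.lintegral_comp hF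
  rw [show (Measure.pi fun _ : Fin (n+1) => (volume : Measure ℝ)) = volume from rfl] at h
  rw [← h]
  congr 1 with p
  congr 1
  simp [MeasurableEquiv.piFinSuccAbove_symm_apply, Fin.insertNthEquiv, Fin.insertNth_zero']

theorem stmt2 (n : ℕ) (hn : 1 ≤ n)
    (f : Fin (n + 1) → (Fin n → ℝ) → ℝ≥0∞) (hf : ∀ j, Measurable (f j)) :
    ∫⁻ x : Fin (n + 1) → ℝ, ∏ j, f j (fun i => x (j.succAbove i)) ≤
      ∏ j, (∫⁻ y : Fin n → ℝ, f j y ^ (n : ℝ)) ^ ((n : ℝ)⁻¹) := by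
  induction n, hn using Nat.le_induction with
  | base =>
    -- n = 1 : Fubini
    have hmeas : Measurable fun x : Fin 2 → ℝ => ∏ j, f j (fun i => x (j.succAbove i)) := by
      refine Finset.measurable_prod _ fun j _ => (hf j).comp ?_
      exact measurable_pi_iff.2 fun i => measurable_pi_apply _
    rw [← lintegral_finCons hmeas]
    have h1 : ∀ i : Fin 1, (1 : Fin 2).succAbove i = 0 := by decide
    have key : ∀ p : ℝ × (Fin 1 → ℝ),
        (∏ j, f j (fun i => (Fin.cons p.1 p.2 : Fin 2 → ℝ) (j.succAbove i)))
          = f 0 p.2 * f 1 (fun _ => p.1) := by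
      intro p
      have e0 : (fun i : Fin 1 => (Fin.cons p.1 p.2 : Fin 2 → ℝ) ((0 : Fin 2).succAbove i))
          = p.2 := by ext i; simp [Fin.zero_succAbove]
      have e1 : (fun i : Fin 1 => (Fin.cons p.1 p.2 : Fin 2 → ℝ) ((1 : Fin 2).succAbove i))
          = fun _ => p.1 := by ext i; rw [h1 i]; simp
      rw [Fin.prod_univ_two, e0, e1]
    simp_rw [key]
    have hm : Measurable (fun p : ℝ × (Fin 1 → ℝ) => f 0 p.2 * f 1 fun _ => p.1) :=
      ((hf 0).comp measurable_snd).mul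
        ((hf 1).comp (measurable_pi_iff.2 fun _ => measurable_fst))
    rw [Measure.volume_eq_prod, lintegral_prod _ hm.aemeasurable]
    simp only []
    rw [show (∫⁻ t : ℝ, ∫⁻ y : Fin 1 → ℝ, f 0 y * f 1 fun _ => t)
        = (∫⁻ y : Fin 1 → ℝ, f 0 y) * ∫⁻ t : ℝ, f 1 fun _ => t by
      simp_rw [lintegral_mul_const _ (hf 0)]
      exact lintegral_const_mul _ ((hf 1).comp (measurable_pi_iff.2 fun _ => measurable_id))]
    have hfu : (∫⁻ t : ℝ, f 1 fun _ => t) = ∫⁻ y : Fin 1 → ℝ, f 1 y := by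
      have h := ((volume_preserving_funUnique (Fin 1) ℝ).symm
        (MeasurableEquiv.funUnique (Fin 1) ℝ)).lintegral_comp (hf 1)
      exact h
    rw [hfu]
    norm_num
    exact (Fin.prod_univ_two (fun j => ∫⁻ y : Fin 1 → ℝ, f j y)).symm.le
  | succ n hn ih =>
    have hN1 : (1 : ℝ) ≤ (n : ℝ) := by exact_mod_cast hn
    have hN0 : (n : ℝ) ≠ 0 := by linarith
    have hd0 : (n : ℝ) + 1 ≠ 0 := by linarith
    -- useful projections are measurable
    have hproj : ∀ k : Fin (n + 1), Measurable
        (fun y : Fin (n + 1) → ℝ => (fun m => y (k.succAbove m) : Fin n → ℝ)) :=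
      fun k => measurable_pi_iff.2 fun m => measurable_pi_apply _
    -- the function g
    set g : Fin (n + 1) → (Fin n → ℝ) → ℝ≥0∞ :=
      fun k z => ∫⁻ t : ℝ, f k.succ (Fin.cons t z) ^ ((n : ℝ) + 1) with hg
    have hfm : ∀ k : Fin (n + 1), Measurable
        (fun p : ℝ × (Fin n → ℝ) => f k.succ (Fin.cons p.1 p.2) ^ ((n : ℝ) + 1)) :=
      fun k => ((hf k.succ).comp measurable_finCons).pow_const _
    have hgm : ∀ k, Measurable (g k) := fun k => (hfm k).lintegral_prod_left'
    -- Step 1: unfold the first coordinate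
    have hmeasF : Measurable fun x : Fin (n + 2) → ℝ =>
        ∏ j, f j (fun i => x (j.succAbove i)) :=
      Finset.measurable_prod _ fun j _ => (hf j).comp
        (measurable_pi_iff.2 fun i => measurable_pi_apply _)
    have step1 : (∫⁻ x : Fin (n + 2) → ℝ, ∏ j, f j (fun i => x (j.succAbove i)))
        = ∫⁻ p : ℝ × (Fin (n + 1) → ℝ), f 0 p.2 *
            ∏ k : Fin (n + 1), f k.succ (Fin.cons p.1 (fun m => p.2 (k.succAbove m))) := by
      rw [← lintegral_finCons hmeasF]
      congr 1 with p
      rw [Fin.prod_univ_succ]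
      congr 1
      refine Finset.prod_congr rfl fun k _ => ?_
      have ek : (fun i : Fin (n + 1) =>
          (Fin.cons p.1 p.2 : Fin (n + 2) → ℝ) (k.succ.succAbove i))
          = Fin.cons p.1 (fun m => p.2 (k.succAbove m)) := by
        ext i
        induction i using Fin.cases with
        | zero => rw [Fin.succ_succAbove_zero]; simp
        | succ m => rw [Fin.succ_succAbove_succ]; simp
      rw [ek]
    have hm1 : Measurable fun p : ℝ × (Fin (n + 1) → ℝ) => f 0 p.2 *
        ∏ k : Fin (n + 1), f k.succ (Fin.cons p.1 (fun m => p.2 (k.succAbove m))) := by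
      refine ((hf 0).comp measurable_snd).mul
        (Finset.measurable_prod _ fun k _ => (hf k.succ).comp ?_)
      exact measurable_finCons.comp (measurable_fst.prodMk
        (measurable_pi_iff.2 fun m => (measurable_pi_apply _).comp measurable_snd))
    -- Step 4 pointwise Hölder in t
    have step4 : ∀ y : Fin (n + 1) → ℝ,
        (∫⁻ t : ℝ, ∏ k : Fin (n + 1), f k.succ (Fin.cons t (fun m => y (k.succAbove m))))
          ≤ ∏ k : Fin (n + 1), (g k (fun m => y (k.succAbove m))) ^ (((n : ℝ) + 1)⁻¹) := by
      intro y
      have H := ENNReal.lintegral_prod_norm_pow_le (μ := (volume : Measure ℝ))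
        (Finset.univ : Finset (Fin (n + 1)))
        (f := fun k t => f k.succ (Fin.cons t (fun m => y (k.succAbove m))) ^ ((n : ℝ) + 1))
        (fun k _ => (((hf k.succ).comp
          (measurable_finCons.comp (measurable_id.prodMk measurable_const))).pow_const
            _).aemeasurable)
        (p := fun _ => ((n : ℝ) + 1)⁻¹)
        (by simp [Finset.card_univ]; field_simp) (fun _ _ => by positivity)
      simp_rw [← ENNReal.rpow_mul, mul_inv_cancel₀ hd0, ENNReal.rpow_one] at H
      exact H
    -- Step 5: two-function Hölder in y
    have hBm : Measurable fun y : Fin (n + 1) → ℝ =>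
        ∏ k : Fin (n + 1), (g k (fun m => y (k.succAbove m))) ^ (((n : ℝ) + 1)⁻¹) :=
      Finset.measurable_prod _ fun k _ => (((hgm k).comp (hproj k)).pow_const _)
    have hpq : Real.HolderConjugate ((n : ℝ) + 1) (((n : ℝ) + 1) / (n : ℝ)) := by
      rw [Real.holderConjugate_iff]; constructor
      · linarith
      · field_simp
        ring
    have step5 := ENNReal.lintegral_mul_le_Lp_mul_Lq volume hpq (hf 0).aemeasurable
      hBm.aemeasurable
    -- Step 6/7: bound the second factor using the inductive hypothesis
    have step7 : (∫⁻ y : Fin (n + 1) → ℝ,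
          (∏ k : Fin (n + 1), (g k (fun m => y (k.succAbove m))) ^ (((n : ℝ) + 1)⁻¹))
            ^ (((n : ℝ) + 1) / (n : ℝ)))
        ≤ ∏ k : Fin (n + 1), (∫⁻ z : Fin n → ℝ, g k z) ^ ((n : ℝ)⁻¹) := by
      have e1 : ∀ y : Fin (n + 1) → ℝ,
          (∏ k : Fin (n + 1), (g k (fun m => y (k.succAbove m))) ^ (((n : ℝ) + 1)⁻¹))
            ^ (((n : ℝ) + 1) / (n : ℝ))
          = ∏ k : Fin (n + 1), (g k (fun m => y (k.succAbove m))) ^ ((n : ℝ)⁻¹) := by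
        intro y
        rw [← ENNReal.prod_rpow_of_nonneg
          (by positivity : (0:ℝ) ≤ ((n : ℝ) + 1) / (n : ℝ))]
        congr 1 with k
        rw [← ENNReal.rpow_mul]
        congr 1
        field_simp
      simp_rw [e1]
      have IH := ih (fun k z => (g k z) ^ ((n : ℝ)⁻¹))
        (fun k => (hgm k).pow_const _)
      have e2 : ∀ k : Fin (n + 1), (∫⁻ z : Fin n → ℝ, ((g k z) ^ ((n : ℝ)⁻¹)) ^ ((n : ℝ)))
          = ∫⁻ z : Fin n → ℝ, g k z := by
        intro k
        congr 1 with z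
        rw [← ENNReal.rpow_mul, inv_mul_cancel₀ hN0, ENNReal.rpow_one]
      calc _ ≤ _ := IH
      _ = ∏ k : Fin (n + 1), (∫⁻ z : Fin n → ℝ, g k z) ^ ((n : ℝ)⁻¹) := by
        refine Finset.prod_congr rfl fun k _ => ?_
        rw [e2 k]
    -- Step 8: Fubini for g
    have step8 : ∀ k : Fin (n + 1), (∫⁻ z : Fin n → ℝ, g k z)
        = ∫⁻ w : Fin (n + 1) → ℝ, f k.succ w ^ ((n : ℝ) + 1) := by
      intro k
      have := lintegral_prod_symm (μ := (volume : Measure ℝ))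
        (ν := (volume : Measure (Fin n → ℝ)))
        (fun p : ℝ × (Fin n → ℝ) => f k.succ (Fin.cons p.1 p.2) ^ ((n : ℝ) + 1))
        (hfm k).aemeasurable
      rw [hg]
      rw [← this, ← Measure.volume_eq_prod,
        lintegral_finCons (((hf k.succ).pow_const _))]
    -- Assemble everything
    calc (∫⁻ x : Fin (n + 2) → ℝ, ∏ j, f j (fun i => x (j.succAbove i)))
        = ∫⁻ y : Fin (n + 1) → ℝ, ∫⁻ t : ℝ, f 0 y *
            ∏ k : Fin (n + 1), f k.succ (Fin.cons t (fun m => y (k.succAbove m))) := by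
          rw [step1, Measure.volume_eq_prod, lintegral_prod_symm _ hm1.aemeasurable]
      _ = ∫⁻ y : Fin (n + 1) → ℝ, f 0 y * ∫⁻ t : ℝ,
            ∏ k : Fin (n + 1), f k.succ (Fin.cons t (fun m => y (k.succAbove m))) := by
          refine lintegral_congr fun y => ?_
          exact lintegral_const_mul _ (Finset.measurable_prod _ fun k _ =>
            (hf k.succ).comp (measurable_finCons.comp (measurable_id.prodMk measurable_const)))
      _ ≤ ∫⁻ y : Fin (n + 1) → ℝ, f 0 y *
            ∏ k : Fin (n + 1), (g k (fun m => y (k.succAbove m))) ^ (((n : ℝ) + 1)⁻¹) :=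
          lintegral_mono fun y => mul_le_mul_right (step4 y) _
      _ ≤ (∫⁻ y : Fin (n + 1) → ℝ, f 0 y ^ ((n : ℝ) + 1)) ^ (1 / ((n : ℝ) + 1)) *
            (∫⁻ y : Fin (n + 1) → ℝ,
              (∏ k : Fin (n + 1), (g k (fun m => y (k.succAbove m))) ^ (((n : ℝ) + 1)⁻¹))
                ^ (((n : ℝ) + 1) / (n : ℝ))) ^ (1 / (((n : ℝ) + 1) / (n : ℝ))) := by
          simpa using step5
      _ ≤ (∫⁻ y : Fin (n + 1) → ℝ, f 0 y ^ ((n : ℝ) + 1)) ^ (1 / ((n : ℝ) + 1)) *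
            (∏ k : Fin (n + 1), (∫⁻ z : Fin n → ℝ, g k z) ^ ((n : ℝ)⁻¹))
              ^ (1 / (((n : ℝ) + 1) / (n : ℝ))) := by
          gcongr
      _ = ∏ j : Fin (n + 2), (∫⁻ y : Fin (n + 1) → ℝ, f j y ^ ((↑(n + 1) : ℝ)))
            ^ ((↑(n + 1) : ℝ))⁻¹ := by
          conv_rhs => rw [Fin.prod_univ_succ]
          push_cast
          congr 1
          · rw [one_div]
          · rw [← ENNReal.prod_rpow_of_nonneg
              (by positivity : (0:ℝ) ≤ 1 / (((n : ℝ) + 1) / (n : ℝ)))]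
            refine Finset.prod_congr rfl fun k _ => ?_
            rw [step8 k, ← ENNReal.rpow_mul]
            congr 1
            field_simp
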